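/- Let R be a commutative ring with identity, n ≥ 2, V̄ a free R-module with basis e_1,…,e_n. Then the intersection γ_n ∩ L_n(V̄) equals the image β_n(γ_n) of γ_n under the map β_n. Consequently Lie(n) := γ_n ∩ L_n(V̄) is simultaneously an R(Σ_n)-submodule of γ_n and, via the surjection β_n : γ_n → Lie(n), a quotient R(Σ_n)-module of γ_n. -/

import Mathlib

open scoped TensorProduct
open PiTensorProduct

noncomputable section

universe u

variable (R : Type u) [CommRing R]

/-- The operator on the `n`-th tensor power of `V` permuting the tensor positions
according to `σ`. -/
def pact (V : Type u) [AddCommGroup V] [Module R V] (n : ℕ) (σ : Equiv.Perm (Fin n)) :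
    (⨂[R]^n V) →ₗ[R] (⨂[R]^n V) :=
  (PiTensorProduct.reindex R (fun _ : Fin n => V) σ).toLinearMap

/-- The functorial action of a linear map on the `n`-th tensor power. -/
def tmap {V W : Type u} [AddCommGroup V] [Module R V] [AddCommGroup W] [Module R W]
    (n : ℕ) (f : V →ₗ[R] W) : (⨂[R]^n V) →ₗ[R] (⨂[R]^n W) :=
  PiTensorProduct.map fun _ => f

/-- Auxiliary operators: `betaAux R V n c k` is the operator on `V^{⊗n}` which applies
the (signed, with signs `c`) left-normed bracketing to the first `k+1` tensor factors. -/
def betaAux (V : Type u) [AddCommGroup V] [Module R V] (n : ℕ) (c : ℕ → R) :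
    ℕ → ((⨂[R]^n V) →ₗ[R] (⨂[R]^n V))
  | 0 => LinearMap.id
  | k + 1 =>
    if h : k + 1 < n then
      (LinearMap.id - c (k + 1) • pact R V n (Fin.cycleRange ⟨k + 1, h⟩)) ∘ₗ
        betaAux V n c k
    else betaAux V n c k

/-- `β_n : V^{⊗n} → V^{⊗n}`, the linear map sending `a₁ ⊗ ⋯ ⊗ a_n` to the left-normed
iterated commutator `[[a₁,a₂],…,a_n]` (with `[a,b] = ab - ba`), regarded inside `V^{⊗n}`. -/
def beta (V : Type u) [AddCommGroup V] [Module R V] (n : ℕ) :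
    (⨂[R]^n V) →ₗ[R] (⨂[R]^n V) :=
  betaAux R V n (fun _ => 1) (n - 1)

/-- `L_n(V) = Im(β_n) ⊆ V^{⊗n}`. -/
def Lsub (V : Type u) [AddCommGroup V] [Module R V] (n : ℕ) : Submodule R (⨂[R]^n V) :=
  LinearMap.range (beta R V n)

variable {n : ℕ} {A : Type u} [AddCommGroup A] [Module R A]

/-- Given a basis `e` of the free module `V̄`, the word `e_{σ(1)} ⊗ ⋯ ⊗ e_{σ(n)}`. -/
def eword (b : Module.Basis (Fin n) R A) (σ : Equiv.Perm (Fin n)) : ⨂[R]^n A :=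
  tprod R fun i => b (σ i)

/-- `γ_n ⊆ V̄^{⊗n}`, the span of the words `e_{σ(1)} ⊗ ⋯ ⊗ e_{σ(n)}` for `σ ∈ Σ_n`. -/
def gammaN (b : Module.Basis (Fin n) R A) : Submodule R (⨂[R]^n A) :=
  Submodule.span R (Set.range (eword R b))

/-- The action of `σ ∈ Σ_n` on `V̄^{⊗n}` by permuting the letters `e_1, …, e_n`,
induced by the linear automorphism `e_i ↦ e_{σ(i)}` of `V̄`. -/
def lact (b : Module.Basis (Fin n) R A) (σ : Equiv.Perm (Fin n)) :
    (⨂[R]^n A) →ₗ[R] (⨂[R]^n A) :=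
  tmap R n (b.equiv b (σ : Fin n ≃ Fin n)).toLinearMap

/-- `Lie(n) = γ_n ∩ L_n(V̄)`. -/
def LieN (b : Module.Basis (Fin n) R A) : Submodule R (⨂[R]^n A) :=
  gammaN R b ⊓ Lsub R A n

/-- The coordinate functional on `V̄^{⊗n}` dual to the word `e_{w(1)} ⊗ ⋯ ⊗ e_{w(n)}`. -/
def lamb (b : Module.Basis (Fin n) R A) (w : Fin n → Fin n) : (⨂[R]^n A) →ₗ[R] R :=
  PiTensorProduct.lift
    ((MultilinearMap.mkPiAlgebra R (Fin n) R).compLinearMap fun i => b.coord (w i))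

/-- The substitution pairing `γ_n ⊗ V^{⊗n} → V^{⊗n}` (extended by zero off `γ_n`):
`(e_{σ(1)} ⊗ ⋯ ⊗ e_{σ(n)}) ⊗ (x_1 ⊗ ⋯ ⊗ x_n) ↦ x_{σ(1)} ⊗ ⋯ ⊗ x_{σ(n)}`,
realizing the canonical identification `γ_n ⊗_{R(Σ_n)} V^{⊗n} ≅ V^{⊗n}`. -/
def cpair (b : Module.Basis (Fin n) R A) (V : Type u) [AddCommGroup V] [Module R V] :
    (⨂[R]^n A) →ₗ[R] (⨂[R]^n V) →ₗ[R] (⨂[R]^n V) :=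
  ∑ σ : Equiv.Perm (Fin n), (lamb R b ⇑σ).smulRight (pact R V n σ⁻¹)

/-- The submodule of balancing relations defining `M ⊗_{R(Σ_n)} V^{⊗n}` for a
`Σ_n`-invariant submodule `M` of `V̄^{⊗n}` (where the right `R(Σ_n)`-module structure
on `M` is the letter action composed with inversion). -/
def relSpan (b : Module.Basis (Fin n) R A) (M : Submodule R (⨂[R]^n A))
    (V : Type u) [AddCommGroup V] [Module R V] :
    Submodule R (↥M ⊗[R] (⨂[R]^n V)) :=
  Submodule.span R
    {z | ∃ (σ : Equiv.Perm (Fin n)) (q : M) (h : lact R b σ ↑q ∈ M) (x : ⨂[R]^n V),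
      z = (⟨lact R b σ ↑q, h⟩ : M) ⊗ₜ[R] x - (q : ↥M) ⊗ₜ[R] (pact R V n σ⁻¹ x)}


section Aux

variable {R : Type u} [CommRing R] {n : ℕ} {A : Type u} [AddCommGroup A] [Module R A]

lemma pact_tprod (V : Type u) [AddCommGroup V] [Module R V] (σ : Equiv.Perm (Fin n))
    (f : Fin n → V) : pact R V n σ (tprod R f) = tprod R fun i => f (σ⁻¹ i) := by
  simp [pact, PiTensorProduct.reindex_tprod]

lemma lamb_tprod (b : Module.Basis (Fin n) R A) (w : Fin n → Fin n) (f : Fin n → A) :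
    lamb R b w (tprod R f) = ∏ i, b.coord (w i) (f i) := by
  simp [lamb]

lemma lamb_word (b : Module.Basis (Fin n) R A) (w v : Fin n → Fin n) :
    lamb R b w (tprod R fun i => b (v i)) = if w = v then 1 else 0 := by
  rw [lamb_tprod]
  by_cases h : w = v
  · subst h
    simp [Module.Basis.coord_apply, Module.Basis.repr_self]
  · rw [if_neg h]
    obtain ⟨i, hi⟩ := Function.ne_iff.mp h
    refine Finset.prod_eq_zero (Finset.mem_univ i) ?_
    simp [Module.Basis.coord_apply, Module.Basis.repr_self, Finsupp.single_apply, hi, Ne.symm hi]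

/-- Projection of `V̄^{⊗n}` onto the multilinear part `γ_n`. -/
def projGamma (b : Module.Basis (Fin n) R A) : (⨂[R]^n A) →ₗ[R] (⨂[R]^n A) :=
  ∑ σ : Equiv.Perm (Fin n), (lamb R b ⇑σ).smulRight (eword R b σ)

lemma projGamma_apply (b : Module.Basis (Fin n) R A) (x : ⨂[R]^n A) :
    projGamma b x = ∑ σ : Equiv.Perm (Fin n), lamb R b ⇑σ x • eword R b σ := by
  simp [projGamma]

lemma projGamma_mem (b : Module.Basis (Fin n) R A) (x : ⨂[R]^n A) :
    projGamma b x ∈ gammaN R b := by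
  rw [projGamma_apply]
  exact Submodule.sum_mem _ fun σ _ =>
    Submodule.smul_mem _ _ (Submodule.subset_span ⟨σ, rfl⟩)

lemma projGamma_eword (b : Module.Basis (Fin n) R A) (τ : Equiv.Perm (Fin n)) :
    projGamma b (eword R b τ) = eword R b τ := by
  rw [projGamma_apply]
  have : ∀ σ : Equiv.Perm (Fin n), lamb R b ⇑σ (eword R b τ) = if σ = τ then 1 else 0 := by
    intro σ
    rw [eword, lamb_word]
    congr 1
    simp [eq_iff_iff, Equiv.coe_inj, DFunLike.coe_fn_eq]
  simp only [this, ite_smul, one_smul, zero_smul]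
  rw [Finset.sum_ite_eq']
  simp

lemma projGamma_fix (b : Module.Basis (Fin n) R A) {x : ⨂[R]^n A} (hx : x ∈ gammaN R b) :
    projGamma b x = x := by
  induction hx using Submodule.span_induction with
  | mem x hx => obtain ⟨σ, rfl⟩ := hx; exact projGamma_eword b σ
  | zero => simp
  | add x y _ _ hx hy => simp [map_add, hx, hy]
  | smul c x _ hx => simp [map_smul, hx]

lemma pact_eword (b : Module.Basis (Fin n) R A) (ρ σ : Equiv.Perm (Fin n)) :
    pact R A n ρ (eword R b σ) = eword R b (σ * ρ⁻¹) := by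
  rw [eword, pact_tprod]
  rfl

lemma lamb_comp_pact (b : Module.Basis (Fin n) R A) (σ ρ : Equiv.Perm (Fin n)) (x : ⨂[R]^n A) :
    lamb R b ⇑σ (pact R A n ρ x) = lamb R b ⇑(σ * ρ) x := by
  have : (lamb R b ⇑σ) ∘ₗ pact R A n ρ = lamb R b ⇑(σ * ρ) := by
    ext f
    simp only [LinearMap.compMultilinearMap_apply, LinearMap.coe_comp, Function.comp_apply]
    rw [pact_tprod, lamb_tprod, lamb_tprod]
    exact (Fintype.prod_equiv ρ _ _ fun i => by
      simp [Equiv.Perm.mul_apply]).symm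
  exact LinearMap.congr_fun this x

lemma projGamma_comm_pact (b : Module.Basis (Fin n) R A) (ρ : Equiv.Perm (Fin n)) :
    (projGamma b) ∘ₗ pact R A n ρ = pact R A n ρ ∘ₗ projGamma b := by
  apply LinearMap.ext; intro x
  simp only [LinearMap.coe_comp, Function.comp_apply, projGamma_apply, map_sum,
    LinearMap.map_smul, lamb_comp_pact, pact_eword]
  exact Fintype.sum_equiv (Equiv.mulRight ρ) _ _ fun σ => by
    simp [mul_assoc]

lemma lact_comm_pact (b : Module.Basis (Fin n) R A) (τ ρ : Equiv.Perm (Fin n)) :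
    (lact R b τ) ∘ₗ pact R A n ρ = pact R A n ρ ∘ₗ lact R b τ := by
  ext f
  simp only [LinearMap.compMultilinearMap_apply, LinearMap.coe_comp, Function.comp_apply,
    lact, tmap]
  rw [pact_tprod, PiTensorProduct.map_tprod, PiTensorProduct.map_tprod, pact_tprod]

lemma comm_betaAux {Q : (⨂[R]^n A) →ₗ[R] (⨂[R]^n A)}
    (hQ : ∀ ρ : Equiv.Perm (Fin n), Q ∘ₗ pact R A n ρ = pact R A n ρ ∘ₗ Q)
    (c : ℕ → R) (k : ℕ) : Q ∘ₗ betaAux R A n c k = betaAux R A n c k ∘ₗ Q := by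
  induction k with
  | zero => simp [betaAux]
  | succ k ih =>
    rw [betaAux]
    split
    · have hD : ∀ (τ : Equiv.Perm (Fin n)) (r : R),
          Q ∘ₗ (LinearMap.id - r • pact R A n τ) = (LinearMap.id - r • pact R A n τ) ∘ₗ Q := by
        intro τ r
        simp only [LinearMap.sub_comp, LinearMap.comp_sub, LinearMap.id_comp,
          LinearMap.comp_id, LinearMap.comp_smul, LinearMap.smul_comp, hQ]
      rw [← LinearMap.comp_assoc, hD, LinearMap.comp_assoc, ih, ← LinearMap.comp_assoc]
    · exact ih

lemma projGamma_comm_beta (b : Module.Basis (Fin n) R A) :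
    ∀ x, projGamma b (beta R A n x) = beta R A n (projGamma b x) := fun x =>
  LinearMap.congr_fun (comm_betaAux (projGamma_comm_pact b) _ _) x

lemma lact_comm_beta (b : Module.Basis (Fin n) R A) (σ : Equiv.Perm (Fin n)) :
    ∀ x, lact R b σ (beta R A n x) = beta R A n (lact R b σ x) := fun x =>
  LinearMap.congr_fun (comm_betaAux (lact_comm_pact b σ) _ _) x

lemma lact_eword (b : Module.Basis (Fin n) R A) (σ τ : Equiv.Perm (Fin n)) :
    lact R b σ (eword R b τ) = eword R b (σ * τ) := by
  simp only [lact, tmap, eword, PiTensorProduct.map_tprod]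
  congr 1
  funext i
  rw [LinearEquiv.coe_coe, Module.Basis.equiv_apply]
  rfl

lemma lact_gammaN (b : Module.Basis (Fin n) R A) (σ : Equiv.Perm (Fin n)) :
    Submodule.map (lact R b σ) (gammaN R b) ≤ gammaN R b := by
  rw [gammaN, Submodule.map_span, Submodule.span_le]
  rintro _ ⟨_, ⟨τ, rfl⟩, rfl⟩
  exact Submodule.subset_span ⟨σ * τ, (lact_eword b σ τ).symm⟩

end Aux

/-- Let `R` be a commutative ring, `n ≥ 2`, and `V̄` a free `R`-module with
basis `e_1, …, e_n`.  Then `Lie(n) = γ_n ∩ L_n(V̄)` equals the image `β_n(γ_n)`; moreover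
`Lie(n)` is an `R(Σ_n)`-submodule of `γ_n` (it is stable under the letter-permutation action),
and via the (equivariant) surjection `β_n : γ_n → Lie(n)` it is a quotient
`R(Σ_n)`-module of `γ_n`. -/
theorem statement0 (R : Type u) [CommRing R] (n : ℕ) (hn : 2 ≤ n)
    (A : Type u) [AddCommGroup A] [Module R A] (b : Module.Basis (Fin n) R A) :
    LieN R b = Submodule.map (beta R A n) (gammaN R b) ∧
    (∀ σ : Equiv.Perm (Fin n), Submodule.map (lact R b σ) (LieN R b) ≤ LieN R b) ∧
    (∀ (σ : Equiv.Perm (Fin n)) (x : ⨂[R]^n A), x ∈ gammaN R b →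
      beta R A n (lact R b σ x) = lact R b σ (beta R A n x)) := by
  refine ⟨?_, ?_, fun σ x _ => (lact_comm_beta b σ x).symm⟩
  · apply le_antisymm
    · rintro x ⟨hg, y, rfl⟩
      refine ⟨projGamma b y, projGamma_mem b y, ?_⟩
      rw [← projGamma_comm_beta b y, projGamma_fix b hg]
    · rintro _ ⟨y, hy, rfl⟩
      refine ⟨?_, y, rfl⟩
      rw [← projGamma_fix b hy, ← projGamma_comm_beta b y]
      exact projGamma_mem b _
  · rintro σ _ ⟨y, ⟨hg, z, rfl⟩, rfl⟩
    exact ⟨lact_gammaN b σ ⟨_, hg, rfl⟩, lact R b σ z, (lact_comm_beta b σ z).symm⟩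

end
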